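/- Let Σ be a nonempty finite alphabet and let x₁, x₂, …, x_n be nonempty words over Σ all of the same length. Then the language L_{x₁=x₂=⋯=x_n} = {z ∈ Σ* : |z|_{x₁} = |z|_{x₂} = ⋯ = |z|_{x_n}} is infinite. -/

import Mathlib

/-- Number of (possibly overlapping) occurrences of `x` as a contiguous
subword (factor) of `z`. -/
def occCount {α : Type*} [DecidableEq α] (x z : List α) : ℕ :=
  ((List.range (z.length + 1)).filter (fun i => decide (x <+: z.drop i))).length

/-- `wpow w n` is the word `w` concatenated with itself `n` times. -/
def wpow {α : Type*} (w : List α) (n : ℕ) : List α := (List.replicate n w).flatten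

/-- `z` is `y`-bordered: `z ≠ y` and `y` is both a prefix and a suffix of `z`. -/
def IsBordered {α : Type*} (y z : List α) : Prop := z ≠ y ∧ y <+: z ∧ y <:+ z

/-- `x` is interlaced by `y`: `y` is a subword (factor) of every `x`-bordered word. -/
def InterlacedBy {α : Type*} (x y : List α) : Prop :=
  ∀ z : List α, IsBordered x z → y <:+: z

namespace Aux

variable {α : Type} [Fintype α] [DecidableEq α]

/-- all words of length k -/
noncomputable def kwords (α : Type) [Fintype α] [DecidableEq α] : ℕ → List (List α)
  | 0 => [[]]
  | k+1 => (Finset.univ : Finset α).toList.flatMap (fun c => (kwords α k).map (c :: ·))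

lemma kwords_length (k : ℕ) : ∀ l ∈ kwords α k, l.length = k := by
  induction k with
  | zero => intro l hl; simp [kwords] at hl; simp [hl]
  | succ k ih =>
    intro l hl
    simp only [kwords, List.mem_flatMap, List.mem_map] at hl
    obtain ⟨c, -, t, ht, rfl⟩ := hl
    simp [ih t ht]

lemma kwords_card (k : ℕ) : (kwords α k).length = (Fintype.card α) ^ k := by
  induction k with
  | zero => simp [kwords]
  | succ k ih =>
    simp [kwords, List.length_flatMap, Function.comp, ih, Finset.length_toList, pow_succ,
      List.map_const', List.sum_replicate, smul_eq_mul, mul_comm]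

lemma kwords_ne_nil [Nonempty α] (k : ℕ) : kwords α k ≠ [] := by
  have h := kwords_card (α := α) k
  have : 0 < (kwords α k).length := by
    rw [h]; exact pow_pos Fintype.card_pos k
  exact List.ne_nil_of_length_pos this


lemma sum_map_ite_eq {β : Type*} [DecidableEq β] (l : List β) (hn : l.Nodup) (b₀ : β)
    (hb : b₀ ∈ l) (v : ℕ) : (l.map (fun c => if c = b₀ then v else 0)).sum = v := by
  induction l with
  | nil => simp at hb
  | cons a l ih =>
    by_cases hc : a = b₀
    · subst hc
      simp only [List.map_cons, List.sum_cons, if_pos rfl]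
      have h0 : (l.map (fun c => if c = a then v else 0)).sum = 0 := by
        apply List.sum_eq_zero
        intro y hy
        simp only [List.mem_map] at hy
        obtain ⟨c, hcl, rfl⟩ := hy
        have : c ≠ a := fun h => (List.nodup_cons.mp hn).1 (h ▸ hcl)
        simp [this]
      simp [h0]
    · have hb' : b₀ ∈ l := by
        rcases List.mem_cons.mp hb with h | h
        · exact absurd h.symm hc
        · exact h
      simp only [List.map_cons, List.sum_cons, if_neg hc]
      rw [ih (List.nodup_cons.mp hn).2 hb']
      simp

lemma countP_drop (k p : ℕ) (hp : p ≤ k) (s : List α) (hs : s.length = k - p) :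
    (kwords α k).countP (fun a => decide (a.drop p = s)) = (Fintype.card α) ^ p := by
  induction k generalizing p s with
  | zero =>
    interval_cases p
    have : s = [] := List.eq_nil_of_length_eq_zero (by simpa using hs)
    subst this
    simp [kwords]
  | succ k ih =>
    rw [show kwords α (k+1) =
      (Finset.univ : Finset α).toList.flatMap (fun c => (kwords α k).map (c :: ·)) from rfl,
      List.countP_flatMap]
    cases p with
    | zero =>
      have hs' : s.length = k + 1 := by simpa using hs
      obtain ⟨c₀, s', rfl⟩ : ∃ c₀ s', s = c₀ :: s' := by
        cases s with
        | nil => simp at hs'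
        | cons a b => exact ⟨a, b, rfl⟩
      have hmap : ((Finset.univ : Finset α).toList.map
          (List.countP (fun a => decide (a.drop 0 = c₀ :: s')) ∘
            fun c => (kwords α k).map (c :: ·))) =
          (Finset.univ : Finset α).toList.map (fun c => if c = c₀ then 1 else 0) := by
        apply List.map_congr_left
        intro c _
        simp only [Function.comp, List.countP_map]
        by_cases hc : c = c₀
        · subst hc
          have heq : ((fun a => decide (List.drop 0 a = c :: s')) ∘ (fun t => c :: t)) =
              fun t => decide (List.drop 0 t = s') := by
            funext t; simp
          rw [heq]
          have hlen : s'.length = k := by simpa using hs'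
          have := ih 0 (Nat.zero_le k) s' (by simpa using hlen)
          simpa using this
        · simp only [hc, if_false]
          apply List.countP_eq_zero.mpr
          intro t _
          simp only [Function.comp_apply, List.drop_zero, decide_eq_true_eq]
          intro h
          exact hc (by injection h)
      rw [hmap, sum_map_ite_eq _ (Finset.nodup_toList _) c₀ (by simp)]
      simp
    | succ q =>
      have hmap : ((Finset.univ : Finset α).toList.map
          (List.countP (fun a => decide (a.drop (q+1) = s)) ∘
            fun c => (kwords α k).map (c :: ·))) =
          (Finset.univ : Finset α).toList.map (fun _ => (Fintype.card α) ^ q) := by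
        apply List.map_congr_left
        intro c _
        simp only [Function.comp, List.countP_map]
        have heq : ((fun a => decide (List.drop (q+1) a = s)) ∘ (fun t => c :: t)) =
            fun t => decide (t.drop q = s) := by
          funext t; simp
        rw [heq]
        exact ih q (by omega) s (by omega)
      rw [hmap]
      simp [List.map_const', List.sum_replicate, smul_eq_mul, Finset.length_toList, pow_succ,
        mul_comm]

lemma countP_take (k p : ℕ) (hp : p ≤ k) (s : List α) (hs : s.length = p) :
    (kwords α k).countP (fun a => decide (a.take p = s)) = (Fintype.card α) ^ (k - p) := by
  induction k generalizing p s with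
  | zero =>
    interval_cases p
    have : s = [] := List.eq_nil_of_length_eq_zero (by simpa using hs)
    subst this
    simp [kwords]
  | succ k ih =>
    cases p with
    | zero =>
      have : s = [] := List.eq_nil_of_length_eq_zero (by simpa using hs)
      subst this
      have : (fun (a : List α) => decide (a.take 0 = [])) = fun _ => true := by
        funext a; simp
      rw [this, List.countP_true, kwords_card]
      simp
    | succ q =>
      rw [show kwords α (k+1) =
        (Finset.univ : Finset α).toList.flatMap (fun c => (kwords α k).map (c :: ·)) from rfl,
        List.countP_flatMap]
      obtain ⟨c₀, s', rfl⟩ : ∃ c₀ s', s = c₀ :: s' := by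
        cases s with
        | nil => simp at hs
        | cons a b => exact ⟨a, b, rfl⟩
      have hs' : s'.length = q := by simpa using hs
      have hmap : ((Finset.univ : Finset α).toList.map
          (List.countP (fun a => decide (a.take (q+1) = c₀ :: s')) ∘
            fun c => (kwords α k).map (c :: ·))) =
          (Finset.univ : Finset α).toList.map
            (fun c => if c = c₀ then (Fintype.card α)^(k - q) else 0) := by
        apply List.map_congr_left
        intro c _
        simp only [Function.comp, List.countP_map]
        by_cases hc : c = c₀
        · subst hc
          have heq : ((fun a => decide (List.take (q+1) a = c :: s')) ∘ (fun t => c :: t)) =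
              fun t => decide (t.take q = s') := by
            funext t; simp
          rw [heq]
          simp only [if_pos rfl]
          exact ih q (by omega) s' hs'
        · simp only [hc, if_false]
          apply List.countP_eq_zero.mpr
          intro t _
          simp only [Function.comp_apply, List.take_succ_cons, decide_eq_true_eq]
          intro h
          exact hc (by injection (of_decide_eq_true h))
      rw [hmap, sum_map_ite_eq _ (Finset.nodup_toList _) c₀ (by simp)]
      congr 1
      omega

end Aux

namespace Aux2

variable {α : Type} [DecidableEq α]

def cnt (x a v : List α) : ℕ :=
  ((List.range a.length).filter (fun p => decide (x <+: (a.drop p ++ v)))).length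

lemma occCount_small (x z : List α) (h : z.length < x.length) : occCount x z = 0 := by
  unfold occCount
  rw [List.length_eq_zero_iff]
  apply List.filter_eq_nil_iff.mpr
  intro i _
  simp only [decide_eq_true_eq]
  intro hp
  have := hp.length_le
  have := List.length_drop (i := i) (l := z)
  omega

lemma occ_peel (x a v : List α) : occCount x (a ++ v) = cnt x a v + occCount x v := by
  unfold occCount cnt
  rw [List.length_append, Nat.add_assoc, List.range_add, List.filter_append,
    List.length_append]
  congr 1
  · apply congrArg
    apply List.filter_congr
    intro p hp
    rw [List.mem_range] at hp
    rw [List.drop_append_of_le_length (by omega)]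
  · rw [List.filter_map, List.length_map]
    apply congrArg
    apply List.filter_congr
    intro i _
    simp only [Function.comp]
    rw [List.drop_length_add_append]

lemma cnt_append (x a b v : List α) :
    cnt x (a ++ b) v = cnt x a (b ++ v) + cnt x b v := by
  unfold cnt
  rw [List.length_append, List.range_add, List.filter_append, List.length_append]
  congr 1
  · apply congrArg
    apply List.filter_congr
    intro p hp
    rw [List.mem_range] at hp
    rw [List.drop_append_of_le_length (by omega), List.append_assoc]
  · rw [List.filter_map, List.length_map]
    apply congrArg
    apply List.filter_congr
    intro i _
    simp only [Function.comp]
    rw [List.drop_length_add_append]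

lemma prefix_ctx {k : ℕ} {x c v v' : List α} (hx : x.length = k) (hc : c ≠ [])
    (hv : v.take (k-1) = v'.take (k-1)) : (x <+: c ++ v) ↔ (x <+: c ++ v') := by
  have hcl : 1 ≤ c.length := List.length_pos_iff.mpr hc
  have key : (c ++ v).take k = (c ++ v').take k := by
    rw [List.take_append, List.take_append]
    congr 1
    have h1 : v.take (k - c.length) = (v.take (k-1)).take (k - c.length) := by
      rw [List.take_take, Nat.min_eq_left (by omega)]
    have h2 : v'.take (k - c.length) = (v'.take (k-1)).take (k - c.length) := by
      rw [List.take_take, Nat.min_eq_left (by omega)]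
    rw [h1, h2, hv]
  rw [List.prefix_iff_eq_take, List.prefix_iff_eq_take, hx, key]

lemma cnt_ctx {k : ℕ} {x v v' : List α} (a : List α) (hx : x.length = k)
    (hv : v.take (k-1) = v'.take (k-1)) : cnt x a v = cnt x a v' := by
  unfold cnt
  apply congrArg
  apply List.filter_congr
  intro p hp
  rw [List.mem_range] at hp
  have hc : a.drop p ≠ [] := by
    have : (a.drop p).length = a.length - p := List.length_drop
    intro h
    rw [h] at this
    simp at this
    omega
  have := prefix_ctx (v := v) (v' := v') hx hc hv
  simp only [this]

lemma cnt_nil (x v : List α) : cnt x [] v = 0 := by simp [cnt]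

end Aux2

namespace Aux3
open Aux2

variable {α : Type} [DecidableEq α]

def adjS (x : List α) (k : ℕ) (a h' : List α) : List (List α) → ℕ
  | [] => 0
  | b :: bs => cnt x b ((if bs.isEmpty then h' else a).take (k-1)) + adjS x k a h' bs

lemma rowSum (x : List α) (k : ℕ) (hx : x.length = k) (hk : 1 ≤ k)
    (a : List α) (ha : a.length = k) :
    ∀ (bs : List (List α)), (∀ b ∈ bs, b.length = k) → ∀ (V h' : List α),
      V.take (k-1) = h'.take (k-1) →
    cnt x (bs.flatMap (fun b => a ++ b)) V
      = (bs.map (fun b => cnt x a (b.take (k-1)))).sum + adjS x k a h' bs := by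
  intro bs
  induction bs with
  | nil => intro _ V h' _; simp [adjS, cnt_nil]
  | cons b bs ih =>
    intro hbs V h' hV
    have hb : b.length = k := hbs b (List.mem_cons_self)
    rw [List.flatMap_cons, List.append_assoc, cnt_append, cnt_append]
    have t1 : cnt x a ((b ++ bs.flatMap (fun b => a ++ b)) ++ V) = cnt x a (b.take (k-1)) := by
      apply cnt_ctx a hx
      rw [List.append_assoc, List.take_append_of_le_length (by omega),
        List.take_take, Nat.min_self]
    have t2 : cnt x b (bs.flatMap (fun b => a ++ b) ++ V)
        = cnt x b ((if bs.isEmpty then h' else a).take (k-1)) := by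
      cases bs with
      | nil =>
        simp only [List.flatMap_nil, List.nil_append, List.isEmpty_nil, if_pos]
        apply cnt_ctx b hx
        rw [hV, List.take_take, Nat.min_self]
      | cons b' bs' =>
        simp only [List.isEmpty_cons, if_neg]
        apply cnt_ctx b hx
        rw [List.flatMap_cons, List.append_assoc, List.append_assoc,
          List.take_append_of_le_length (by omega),
          List.take_take, Nat.min_self]
        simp
    rw [t1, t2, ih (fun c hc => hbs c (List.mem_cons_of_mem b hc)) V h' hV]
    simp [adjS]
    omega

lemma adjS_eq (x : List α) (k : ℕ) (a h' : List α) :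
    ∀ (bs : List (List α)) (h : bs ≠ []),
      adjS x k a h' bs = (bs.dropLast.map (fun b => cnt x b (a.take (k-1)))).sum
        + cnt x (bs.getLast h) (h'.take (k-1)) := by
  intro bs
  induction bs with
  | nil => intro h; exact absurd rfl h
  | cons b bs ih =>
    intro _
    cases bs with
    | nil => simp [adjS]
    | cons b' bs' =>
      rw [show adjS x k a h' (b :: b' :: bs')
          = cnt x b (a.take (k-1)) + adjS x k a h' (b' :: bs') by simp [adjS]]
      rw [ih (by simp)]
      simp only [List.dropLast_cons₂, List.map_cons, List.sum_cons,
        List.getLast_cons_cons]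
      omega

lemma outer (x : List α) (k : ℕ) (hx : x.length = k) (hk : 1 ≤ k)
    (ws : List (List α)) (hws : ∀ b ∈ ws, b.length = k) (hwsne : ws ≠ []) :
    ∀ (as : List (List α)), (∀ a ∈ as, a.length = k) → ∀ (V h₀ : List α),
      V.take (k-1) = h₀.take (k-1) →
    cnt x (as.flatMap (fun a => ws.flatMap (fun b => a ++ b))) V
      = ((as.zip (as.tail ++ [h₀])).map (fun e =>
          (ws.map (fun b => cnt x e.1 (b.take (k-1)))).sum + adjS x k e.1 e.2 ws)).sum := by
  intro as
  induction as with
  | nil => intro _ V h₀ _; simp [cnt_nil]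
  | cons a as ih =>
    intro has V h₀ hV
    have ha : a.length = k := has a (List.mem_cons_self)
    rw [List.flatMap_cons, cnt_append]
    cases as with
    | nil =>
      simp only [List.flatMap_nil, List.nil_append, cnt_nil, Nat.add_zero]
      rw [rowSum x k hx hk a ha ws hws V h₀ hV]
      simp
    | cons a' as' =>
      obtain ⟨w0, ws', rfl⟩ : ∃ w0 ws', ws = w0 :: ws' := by
        cases ws with
        | nil => exact absurd rfl hwsne
        | cons c d => exact ⟨c, d, rfl⟩
      have ha' : a'.length = k := has a' (by simp)
      have hVa : ((a' :: as').flatMap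
            (fun a => (w0 :: ws').flatMap (fun b => a ++ b)) ++ V).take (k-1)
          = a'.take (k-1) := by
        rw [List.flatMap_cons, List.flatMap_cons, List.append_assoc, List.append_assoc,
          List.append_assoc, List.take_append_of_le_length (by omega)]
      rw [rowSum x k hx hk a ha (w0 :: ws') hws _ a' hVa]
      rw [ih (fun c hc => has c (List.mem_cons_of_mem a hc)) V h₀ hV]
      simp only [List.tail_cons, List.zip_cons_cons, List.map_cons, List.sum_cons,
        List.cons_append]

end Aux3

namespace Aux4

lemma sum_map_add' {β : Type*} (l : List β) (f g : β → ℕ) :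
    (l.map (fun a => f a + g a)).sum = (l.map f).sum + (l.map g).sum := by
  induction l with
  | nil => simp
  | cons a l ih => simp [ih]; omega

lemma list_sum_comm {β γ : Type*} (l₁ : List β) (l₂ : List γ) (f : β → γ → ℕ) :
    (l₁.map (fun a => (l₂.map (fun b => f a b)).sum)).sum
      = (l₂.map (fun b => (l₁.map (fun a => f a b)).sum)).sum := by
  induction l₁ with
  | nil => simp
  | cons a l ih =>
    simp only [List.map_cons, List.sum_cons, ih, ← sum_map_add']

lemma zip_sum_add {β γ : Type*} (f : β → ℕ) (g : γ → ℕ) :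
    ∀ (l₁ : List β) (l₂ : List γ), l₁.length = l₂.length →
    ((l₁.zip l₂).map (fun e => f e.1 + g e.2)).sum = (l₁.map f).sum + (l₂.map g).sum := by
  intro l₁
  induction l₁ with
  | nil => intro l₂ h; simp [(List.length_eq_zero_iff.mp h.symm)]
  | cons a l ih =>
    intro l₂ h
    cases l₂ with
    | nil => simp at h
    | cons b l₂' =>
      simp only [List.zip_cons_cons, List.map_cons, List.sum_cons]
      rw [ih l₂' (by simpa using h)]
      omega

lemma countP_eq_sum {β : Type*} (pr : β → Bool) (l : List β) :
    l.countP pr = (l.map (fun i => if pr i = true then 1 else 0)).sum := by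
  induction l with
  | nil => simp
  | cons a l ih =>
    rw [List.countP_cons, ih]
    by_cases h : pr a <;> simp [h] <;> omega

lemma double_count {β : Type*} (L₁ L₂ : List β) (A B : β → Bool) :
    (L₁.map (fun a => (L₂.map (fun b => if (A a && B b) = true then 1 else 0)).sum)).sum
      = L₁.countP A * L₂.countP B := by
  have inner : ∀ a, (L₂.map (fun b => if (A a && B b) = true then 1 else 0)).sum
      = (if A a = true then 1 else 0) * L₂.countP B := by
    intro a
    by_cases h : A a = true
    · simp only [h, Bool.true_and, if_pos, one_mul]
      exact (countP_eq_sum B L₂).symm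
    · have hz : (L₂.map (fun b => if (A a && B b) = true then 1 else 0)).sum = 0 := by
        apply List.sum_eq_zero
        intro y hy
        simp only [List.mem_map] at hy
        obtain ⟨b, _, rfl⟩ := hy
        simp [h]
      rw [hz]
      simp [h]
    
  rw [List.map_congr_left (fun a _ => inner a), List.sum_map_mul_right,
    ← countP_eq_sum]

end Aux4

namespace Aux5
open Aux Aux2 Aux3 Aux4

variable {α : Type} [Fintype α] [DecidableEq α] [Nonempty α]

lemma window_iff {k p : ℕ} (x a b : List α) (hx : x.length = k) (ha : a.length = k)
    (hb : b.length = k) (hp : p < k) :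
    (x <+: a.drop p ++ b.take (k-1)) ↔
      (a.drop p = x.take (k-p) ∧ b.take p = x.drop (k-p)) := by
  have hld : (a.drop p).length = k - p := by rw [List.length_drop, ha]
  have h1 : (a.drop p ++ b.take (k-1)).take k = a.drop p ++ b.take p := by
    rw [List.take_append]
    have h2 : (a.drop p).take k = a.drop p := List.take_of_length_le (by omega)
    rw [h2, List.take_take, hld]
    have h3 : k - (k - p) = p := by omega
    rw [h3, min_eq_left (by omega)]
  rw [List.prefix_iff_eq_take, hx, h1]
  constructor
  · intro h
    constructor
    · rw [h, List.take_left' hld]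
    · have hbt : (b.take p).length = p := by
        rw [List.length_take, hb]; omega
      rw [h, List.drop_left' hld]
  · rintro ⟨h1', h2'⟩
    rw [h1', h2', List.take_append_drop]

lemma cnt_as_countP {k : ℕ} (x a b : List α) (hx : x.length = k) (ha : a.length = k)
    (hb : b.length = k) :
    cnt x a (b.take (k-1)) = (List.range k).countP
      (fun p => decide (a.drop p = x.take (k-p)) && decide (b.take p = x.drop (k-p))) := by
  rw [cnt, ← List.countP_eq_length_filter, ha]
  apply List.countP_congr
  intro p hp
  rw [List.mem_range] at hp
  simp only [decide_eq_true_eq, Bool.and_eq_true]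
  exact window_iff x a b hx ha hb hp

lemma double_eval {k : ℕ} (x : List α) (hx : x.length = k) (hk : 1 ≤ k) :
    ((kwords α k).map (fun a =>
        ((kwords α k).map (fun b => cnt x a (b.take (k-1)))).sum)).sum
      = ((List.range k).map
          (fun p => (Fintype.card α)^p * (Fintype.card α)^(k-p))).sum := by
  set L := kwords α k with hLdef
  have hLlen : ∀ a ∈ L, a.length = k := kwords_length k
  have step1 : (L.map (fun a => (L.map (fun b => cnt x a (b.take (k-1)))).sum)).sum
      = (L.map (fun a => ((List.range k).map (fun p =>
          (L.map (fun b => if (decide (a.drop p = x.take (k-p))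
            && decide (b.take p = x.drop (k-p))) = true then 1 else 0)).sum)).sum)).sum := by
    apply congrArg
    apply List.map_congr_left
    intro a haL
    rw [show (L.map (fun b => cnt x a (b.take (k-1)))).sum
        = (L.map (fun b => (List.range k).countP
            (fun p => decide (a.drop p = x.take (k-p))
              && decide (b.take p = x.drop (k-p))))).sum by
      apply congrArg
      apply List.map_congr_left
      intro b hbL
      exact cnt_as_countP x a b hx (hLlen a haL) (hLlen b hbL)]
    rw [show (L.map (fun b => (List.range k).countP
            (fun p => decide (a.drop p = x.take (k-p))
              && decide (b.take p = x.drop (k-p))))).sum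
        = (L.map (fun b => ((List.range k).map (fun p =>
            if (decide (a.drop p = x.take (k-p))
              && decide (b.take p = x.drop (k-p))) = true then 1 else 0)).sum)).sum by
      apply congrArg
      apply List.map_congr_left
      intro b _
      exact countP_eq_sum _ _]
    exact list_sum_comm L (List.range k) _
  rw [step1, list_sum_comm L (List.range k) _]
  apply congrArg
  apply List.map_congr_left
  intro p hp
  rw [List.mem_range] at hp
  rw [double_count L L (fun a => decide (a.drop p = x.take (k-p)))
    (fun b => decide (b.take p = x.drop (k-p)))]
  rw [countP_drop k p (by omega) (x.take (k-p)) (by rw [List.length_take, hx]; omega),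
    countP_take k p (by omega) (x.drop (k-p)) (by rw [List.length_drop, hx]; omega)]

end Aux5

namespace Aux5

variable {α : Type} [Fintype α] [DecidableEq α] [Nonempty α]
open Aux Aux2 Aux3 Aux4

noncomputable def bigW (α : Type) [Fintype α] [DecidableEq α] (k : ℕ) : List α :=
  (kwords α k).flatMap (fun a => (kwords α k).flatMap (fun b => a ++ b))

lemma bigW_decomp (k : ℕ) : ∃ hd tl R, kwords α k = hd :: tl ∧
    bigW α k = hd ++ (hd ++ R) ∧ hd.length = k := by
  obtain ⟨hd, tl, hL⟩ : ∃ hd tl, kwords α k = hd :: tl := by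
    cases h : kwords α k with
    | nil => exact absurd h (kwords_ne_nil k)
    | cons a b => exact ⟨a, b, rfl⟩
  refine ⟨hd, tl, tl.flatMap (fun b => hd ++ b) ++ tl.flatMap
      (fun a => (hd :: tl).flatMap (fun b => a ++ b)), hL, ?_,
      kwords_length k hd (hL ▸ List.mem_cons_self)⟩
  rw [bigW, hL]
  simp [List.flatMap_cons, List.append_assoc]

lemma bigW_len (k : ℕ) (hk : 1 ≤ k) : k ≤ (bigW α k).length := by
  obtain ⟨hd, tl, R, hL, hW, hhd⟩ := bigW_decomp (α := α) k
  rw [hW]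
  simp only [List.length_append]
  omega

lemma bigW_take (k : ℕ) (hk : 1 ≤ k) :
    (bigW α k).take (k-1) = ((bigW α k).take (k-1)).take (k-1) := by
  rw [List.take_take, Nat.min_self]

lemma D_val {k : ℕ} (x : List α) (hx : x.length = k) (hk : 1 ≤ k) :
    cnt x (bigW α k) ((bigW α k).take (k-1)) =
      2 * ((List.range k).map
        (fun p => (Fintype.card α)^p * (Fintype.card α)^(k-p))).sum := by
  obtain ⟨hd, tl, R, hL, hW, hhd⟩ := bigW_decomp (α := α) k
  set L := kwords α k with hLdef
  have hLlen : ∀ a ∈ L, a.length = k := kwords_length k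
  have hLne : L ≠ [] := kwords_ne_nil k
  have hWtake : (bigW α k).take (k-1) = hd.take (k-1) := by
    rw [hW, List.take_append_of_le_length (by omega)]
  have hpadtake : ((bigW α k).take (k-1)).take (k-1) = hd.take (k-1) := by
    rw [List.take_take, Nat.min_self, hWtake]
  show cnt x (L.flatMap (fun a => L.flatMap (fun b => a ++ b)))
      ((bigW α k).take (k-1)) = _
  rw [outer x k hx hk L hLlen hLne L hLlen _ hd hpadtake]
  -- rewrite summand using adjS_eq
  have hsummand : ∀ e ∈ L.zip (L.tail ++ [hd]),
      ((L.map (fun b => cnt x e.1 (b.take (k-1)))).sum + adjS x k e.1 e.2 L)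
      = (((L.map (fun b => cnt x e.1 (b.take (k-1)))).sum
          + (L.dropLast.map (fun b => cnt x b (e.1.take (k-1)))).sum)
        + cnt x (L.getLast hLne) (e.2.take (k-1))) := by
    intro e _
    rw [adjS_eq x k e.1 e.2 L hLne]
    omega
  rw [List.map_congr_left hsummand]
  rw [zip_sum_add
    (fun p => (L.map (fun b => cnt x p (b.take (k-1)))).sum
      + (L.dropLast.map (fun b => cnt x b (p.take (k-1)))).sum)
    (fun q => cnt x (L.getLast hLne) (q.take (k-1)))
    L (L.tail ++ [hd]) (by rw [hL]; simp)]
  -- permute the g-sum back to L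
  have hgperm : ((L.tail ++ [hd]).map
        (fun q => cnt x (L.getLast hLne) (q.take (k-1)))).sum
      = (L.map (fun q => cnt x (L.getLast hLne) (q.take (k-1)))).sum := by
    apply List.Perm.sum_eq
    apply List.Perm.map
    rw [hL]
    simpa using List.perm_append_singleton hd tl
  rw [hgperm, ← sum_map_add']
  have hcomb : ∀ p ∈ L,
      ((L.map (fun b => cnt x p (b.take (k-1)))).sum
          + (L.dropLast.map (fun b => cnt x b (p.take (k-1)))).sum)
        + cnt x (L.getLast hLne) (p.take (k-1))
      = (L.map (fun b => cnt x p (b.take (k-1)))).sum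
          + (L.map (fun b => cnt x b (p.take (k-1)))).sum := by
    intro p _
    have : (L.dropLast.map (fun b => cnt x b (p.take (k-1)))).sum
        + cnt x (L.getLast hLne) (p.take (k-1))
        = (L.map (fun b => cnt x b (p.take (k-1)))).sum := by
      conv_rhs => rw [← List.dropLast_append_getLast hLne]
      rw [List.map_append]
      simp
    omega
  rw [List.map_congr_left hcomb, sum_map_add']
  rw [double_eval x hx hk]
  rw [list_sum_comm L L (fun a b => cnt x b (a.take (k-1)))]
  rw [double_eval x hx hk]
  omega

end Aux5

namespace Aux6
open Aux Aux2 Aux3 Aux4 Aux5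

variable {α : Type} [Fintype α] [DecidableEq α] [Nonempty α]

lemma wpow_succ {β : Type*} (w : List β) (m : ℕ) : wpow w (m+1) = w ++ wpow w m := by
  simp [wpow, List.replicate_succ]

lemma wpow_length {β : Type*} (w : List β) (m : ℕ) : (wpow w m).length = m * w.length := by
  induction m with
  | zero => simp [wpow]
  | succ m ih => rw [wpow_succ, List.length_append, ih]; ring

lemma pad_length (k : ℕ) : ((bigW α k).take (k-1)).length ≤ k - 1 := by
  rw [List.length_take]; omega

lemma zee_take (k : ℕ) (hk : 1 ≤ k) (m : ℕ) :
    (wpow (bigW α k) m ++ (bigW α k).take (k-1)).take (k-1) = (bigW α k).take (k-1) := by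
  cases m with
  | zero =>
    rw [show wpow (bigW α k) 0 = [] by simp [wpow], List.nil_append,
      List.take_take, Nat.min_self]
  | succ m =>
    rw [wpow_succ, List.append_assoc,
      List.take_append_of_le_length (by have := bigW_len (α := α) k hk; omega)]

lemma occ_zee {k : ℕ} (x : List α) (hx : x.length = k) (hk : 1 ≤ k) (m : ℕ) :
    occCount x (wpow (bigW α k) m ++ (bigW α k).take (k-1))
      = m * (2 * ((List.range k).map
          (fun p => (Fintype.card α)^p * (Fintype.card α)^(k-p))).sum) := by
  induction m with
  | zero =>
    rw [show wpow (bigW α k) 0 = [] by simp [wpow], List.nil_append]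
    rw [occCount_small x _ (by have := pad_length (α := α) k; omega)]
    ring
  | succ m ih =>
    rw [wpow_succ, List.append_assoc, occ_peel, ih]
    have hc : cnt x (bigW α k) (wpow (bigW α k) m ++ (bigW α k).take (k-1))
        = cnt x (bigW α k) ((bigW α k).take (k-1)) := by
      apply cnt_ctx _ hx
      rw [zee_take k hk m, List.take_take, Nat.min_self]
    rw [hc, D_val x hx hk]
    ring

end Aux6


open Aux Aux2 Aux3 Aux4 Aux5 Aux6 in
theorem stmt_18 {α : Type} [Fintype α] [DecidableEq α] [Nonempty α]
    (n : ℕ) (xs : Fin n → List α) (hne : ∀ i, xs i ≠ [])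
    (hlen : ∀ i j, (xs i).length = (xs j).length) :
    {z : List α | ∀ i j, occCount (xs i) z = occCount (xs j) z}.Infinite := by
  rcases Nat.eq_zero_or_pos n with hn | hn
  · subst hn
    refine Set.infinite_of_injective_forall_mem
      (f := fun m : ℕ => List.replicate m (Classical.arbitrary α)) ?_ ?_
    · intro a b h
      have := congrArg List.length h
      simpa using this
    · intro m i j
      exact i.elim0
  · set k := (xs ⟨0, hn⟩).length with hkdef
    have hk : 1 ≤ k := by
      rw [hkdef]
      exact List.length_pos_iff.mpr (hne _)
    have hall : ∀ i, (xs i).length = k := fun i => hlen i ⟨0, hn⟩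
    refine Set.infinite_of_injective_forall_mem
      (f := fun m : ℕ => wpow (bigW α k) m ++ (bigW α k).take (k-1)) ?_ ?_
    · intro m₁ m₂ h
      have hlen' := congrArg List.length h
      simp only [List.length_append, wpow_length] at hlen'
      have hW := bigW_len (α := α) k hk
      have hipos : 0 < (bigW α k).length := by omega
      have hmul : m₁ * (bigW α k).length = m₂ * (bigW α k).length := by omega
      exact Nat.eq_of_mul_eq_mul_right hipos hmul
    · intro m
      simp only [Set.mem_setOf_eq]
      intro i j
      rw [occ_zee (xs i) (hall i) hk, occ_zee (xs j) (hall j) hk]
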